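/- Let C ⊆ R^n be nonempty, closed, convex, and line-free (i.e. recc C is pointed), and suppose sequences v^ν, r^ν in R^n satisfy: inf_{c∈C} ||v^ν - c|| → 0, inf_{r∈recc C} ||r^ν - r|| → 0, and v^ν + r^ν ∈ B_M(x) for some fixed M ≥ 0 and x ∈ R^n. Then the sequence ||v^ν|| is bounded. -/

import Mathlib

open Metric Set Filter
open scoped ENNReal Pointwise Topology RealInnerProductSpace

noncomputable section

/-- The recession cone of a set `C`. -/
def recc {n : ℕ} (C : Set (EuclideanSpace ℝ (Fin n))) : Set (EuclideanSpace ℝ (Fin n)) :=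
  {d | ∀ x ∈ C, ∀ t : ℝ, 0 ≤ t → x + t • d ∈ C}

/-- The excess of `C₁` over `C₂`: `sup_{c₁ ∈ C₁} inf_{c₂ ∈ C₂} ‖c₁ - c₂‖`, valued in `ℝ≥0∞`. -/
def exc {n : ℕ} (C₁ C₂ : Set (EuclideanSpace ℝ (Fin n))) : ℝ≥0∞ :=
  ⨆ x ∈ C₁, EMetric.infEdist x C₂

lemma recc_zero_mem {n : ℕ} {C : Set (EuclideanSpace ℝ (Fin n))} : (0 : EuclideanSpace ℝ (Fin n)) ∈ recc C := by
  intro x hx t ht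
  simpa using hx

lemma recc_smul_mem {n : ℕ} {C : Set (EuclideanSpace ℝ (Fin n))} {d : EuclideanSpace ℝ (Fin n)}
    (hd : d ∈ recc C) {s : ℝ} (hs : 0 ≤ s) : s • d ∈ recc C := by
  intro x hx t ht
  rw [smul_smul]
  exact hd x hx (t * s) (mul_nonneg ht hs)

lemma recc_isClosed {n : ℕ} {C : Set (EuclideanSpace ℝ (Fin n))} (hcl : IsClosed C) :
    IsClosed (recc C) := by
  have : recc C = ⋂ (x ∈ C) (t ∈ Ici (0:ℝ)), (fun d : EuclideanSpace ℝ (Fin n) => x + t • d) ⁻¹' C := by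
    ext d
    simp [recc, Set.mem_iInter]
  rw [this]
  refine isClosed_iInter fun x => isClosed_iInter fun _ => isClosed_iInter fun t =>
    isClosed_iInter fun _ => hcl.preimage (continuous_const.add (continuous_id.const_smul t))

theorem stmt7 {n : ℕ} (C : Set (EuclideanSpace ℝ (Fin n)))
    (hne : C.Nonempty) (hcl : IsClosed C) (hcv : Convex ℝ C)
    (hpointed : ∀ d ∈ recc C, -d ∈ recc C → d = 0)
    (v r : ℕ → EuclideanSpace ℝ (Fin n))
    (hv : Tendsto (fun ν => Metric.infDist (v ν) C) atTop (nhds 0))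
    (hr : Tendsto (fun ν => Metric.infDist (r ν) (recc C)) atTop (nhds 0))
    (M : ℝ) (hM : 0 ≤ M) (x : EuclideanSpace ℝ (Fin n))
    (hball : ∀ ν, v ν + r ν ∈ Metric.closedBall x M) :
    ∃ B : ℝ, ∀ ν, ‖v ν‖ ≤ B := by
  by_contra hB
  push_neg at hB
  -- pick indices ν k ≥ k with ‖v (ν k)‖ > k
  choose ν hν using fun k : ℕ => hB ((k : ℝ) + ∑ i ∈ Finset.range k, ‖v i‖)
  have hsum_nonneg : ∀ k, (0:ℝ) ≤ ∑ i ∈ Finset.range k, ‖v i‖ := fun k =>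
    Finset.sum_nonneg fun i _ => norm_nonneg _
  have hνk : ∀ k, k ≤ ν k := by
    intro k
    by_contra hlt
    push_neg at hlt
    have h1 : ‖v (ν k)‖ ≤ ∑ i ∈ Finset.range k, ‖v i‖ :=
      Finset.single_le_sum (fun i _ => norm_nonneg (v i)) (Finset.mem_range.mpr hlt)
    have := hν k
    nlinarith [Nat.cast_nonneg (α := ℝ) k]
  have hnormv : ∀ k : ℕ, (k : ℝ) ≤ ‖v (ν k)‖ := fun k => by
    have := hν k; have := hsum_nonneg k; linarith
  have hνtop : Tendsto ν atTop atTop := tendsto_atTop_mono hνk tendsto_id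
  have hv' : Tendsto (fun k => Metric.infDist (v (ν k)) C) atTop (𝓝 0) := hv.comp hνtop
  have hr' : Tendsto (fun k => Metric.infDist (r (ν k)) (recc C)) atTop (𝓝 0) := hr.comp hνtop
  have hrne : (recc C).Nonempty := ⟨0, recc_zero_mem⟩
  have hrecc_cl : IsClosed (recc C) := recc_isClosed hcl
  -- choose c k ∈ C, d k ∈ recc C close to v (ν k), r (ν k)
  have hcex : ∀ k : ℕ, ∃ c ∈ C, dist (v (ν k)) c < Metric.infDist (v (ν k)) C + ((k:ℝ)+1)⁻¹ := by
    intro k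
    exact (Metric.infDist_lt_iff hne).mp (lt_add_of_pos_right _ (by positivity))
  have hdex : ∀ k : ℕ, ∃ d ∈ recc C,
      dist (r (ν k)) d < Metric.infDist (r (ν k)) (recc C) + ((k:ℝ)+1)⁻¹ := by
    intro k
    exact (Metric.infDist_lt_iff hrne).mp (lt_add_of_pos_right _ (by positivity))
  choose c hcC hc using hcex
  choose d hdR hd using hdex
  have hinv0 : Tendsto (fun k : ℕ => ((k:ℝ)+1)⁻¹) atTop (𝓝 0) := by
    simpa [one_div] using (tendsto_one_div_add_atTop_nhds_zero_nat : Tendsto (fun n : ℕ => 1 / ((n : ℝ) + 1)) atTop (𝓝 0))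
  have ha : Tendsto (fun k => dist (v (ν k)) (c k)) atTop (𝓝 0) := by
    refine squeeze_zero (fun k => dist_nonneg) (fun k => (hc k).le) ?_
    simpa using hv'.add hinv0
  have hb : Tendsto (fun k => dist (r (ν k)) (d k)) atTop (𝓝 0) := by
    refine squeeze_zero (fun k => dist_nonneg) (fun k => (hd k).le) ?_
    simpa using hr'.add hinv0
  -- ‖c k‖ → ∞
  have hctop : Tendsto (fun k => ‖c k‖) atTop atTop := by
    have h1 : Tendsto (fun k => -dist (v (ν k)) (c k) + (k:ℝ)) atTop atTop :=
      (ha.neg.add_atTop tendsto_natCast_atTop_atTop)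
    refine tendsto_atTop_mono (fun k => ?_) h1
    have h2 : ‖v (ν k)‖ - ‖c k‖ ≤ dist (v (ν k)) (c k) := by
      rw [dist_eq_norm]; exact norm_sub_norm_le _ _
    have := hnormv k
    simp only [neg_add_eq_sub]
    linarith
  -- bounded sum c k + d k
  have hsum : ∀ k, ‖c k + d k‖ ≤ dist (v (ν k)) (c k) + dist (r (ν k)) (d k) + (M + ‖x‖) := by
    intro k
    have h1 : ‖v (ν k) + r (ν k)‖ ≤ M + ‖x‖ := by
      have := hball (ν k)
      rw [Metric.mem_closedBall, dist_eq_norm] at this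
      calc ‖v (ν k) + r (ν k)‖ = ‖(v (ν k) + r (ν k) - x) + x‖ := by abel_nf
        _ ≤ ‖v (ν k) + r (ν k) - x‖ + ‖x‖ := norm_add_le _ _
        _ ≤ M + ‖x‖ := by linarith
    calc ‖c k + d k‖ = ‖(c k - v (ν k)) + (d k - r (ν k)) + (v (ν k) + r (ν k))‖ := by congr 1; abel
      _ ≤ ‖c k - v (ν k)‖ + ‖d k - r (ν k)‖ + ‖v (ν k) + r (ν k)‖ :=
          (norm_add_le _ _).trans (by gcongr; exact norm_add_le _ _)
      _ ≤ _ := by rw [dist_eq_norm', dist_eq_norm']; linarith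
  -- normalized sequence
  set w : ℕ → EuclideanSpace ℝ (Fin n) := fun k => ‖c k‖⁻¹ • c k with hw
  have hwball : ∀ k, w k ∈ Metric.closedBall (0 : EuclideanSpace ℝ (Fin n)) 1 := by
    intro k
    rw [Metric.mem_closedBall, dist_zero_right, hw, norm_smul, norm_inv, norm_norm]
    rcases eq_or_ne ‖c k‖ 0 with h | h
    · simp [h]
    · rw [inv_mul_cancel₀ h]
  obtain ⟨u, -, φ, hφ, hwu⟩ :=
    tendsto_subseq_of_bounded Metric.isBounded_closedBall hwball
  have hφtop : Tendsto φ atTop atTop := hφ.tendsto_atTop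
  have hcφtop : Tendsto (fun j => ‖c (φ j)‖) atTop atTop := hctop.comp hφtop
  have hcφpos : ∀ᶠ j in atTop, 0 < ‖c (φ j)‖ := hcφtop.eventually_gt_atTop 0
  -- ‖u‖ = 1
  have hu1 : ‖u‖ = 1 := by
    have h1 : Tendsto (fun j => ‖w (φ j)‖) atTop (𝓝 ‖u‖) := hwu.norm
    have h2 : ∀ᶠ j in atTop, ‖w (φ j)‖ = 1 := by
      filter_upwards [hcφpos] with j hj
      rw [hw, norm_smul, norm_inv, norm_norm, inv_mul_cancel₀ hj.ne']
    exact tendsto_nhds_unique ((tendsto_congr' h2).mp h1) tendsto_const_nhds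
  -- key convergence: ‖c (φ j)‖⁻¹ • (c (φ j) + d (φ j)) → 0
  have hinvc : Tendsto (fun j => ‖c (φ j)‖⁻¹) atTop (𝓝 0) := hcφtop.inv_tendsto_atTop
  have hkey : Tendsto (fun j => ‖c (φ j)‖⁻¹ • (c (φ j) + d (φ j))) atTop
      (𝓝 (0 : EuclideanSpace ℝ (Fin n))) := by
    have hbound : Tendsto (fun j => ‖c (φ j)‖⁻¹ *
        (dist (v (ν (φ j))) (c (φ j)) + dist (r (ν (φ j))) (d (φ j)) + (M + ‖x‖)))
        atTop (𝓝 (0 * (0 + 0 + (M + ‖x‖)))) :=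
      hinvc.mul (((ha.comp hφtop).add (hb.comp hφtop)).add tendsto_const_nhds)
    rw [zero_mul] at hbound
    refine squeeze_zero_norm (fun j => ?_) hbound
    rw [norm_smul, norm_inv, norm_norm]
    exact mul_le_mul_of_nonneg_left (hsum (φ j)) (by positivity)
  -- u ∈ recc C
  have huR : u ∈ recc C := by
    intro x0 hx0 t ht
    have hev : ∀ᶠ j in atTop, t + 1 ≤ ‖c (φ j)‖ := hcφtop.eventually_ge_atTop (t + 1)
    have hmem : ∀ᶠ j in atTop,
        (1 - t * ‖c (φ j)‖⁻¹) • x0 + t • w (φ j) ∈ C := by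
      filter_upwards [hev] with j hj
      have hpos : (0:ℝ) < ‖c (φ j)‖ := by linarith
      have hs0 : 0 ≤ t * ‖c (φ j)‖⁻¹ := by positivity
      have hs1 : t * ‖c (φ j)‖⁻¹ ≤ 1 := by
        rw [← div_eq_mul_inv]
        exact div_le_one_of_le₀ (by linarith) hpos.le
      have hmem' : (1 - t * ‖c (φ j)‖⁻¹) • x0 + (t * ‖c (φ j)‖⁻¹) • c (φ j) ∈ C :=
        hcv hx0 (hcC (φ j)) (by linarith) hs0 (by ring)
      have heq : (t * ‖c (φ j)‖⁻¹) • c (φ j) = t • w (φ j) := by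
        rw [hw, smul_smul]
      rwa [heq] at hmem'
    have hlim : Tendsto (fun j => (1 - t * ‖c (φ j)‖⁻¹) • x0 + t • w (φ j)) atTop
        (𝓝 (x0 + t • u)) := by
      have h1 : Tendsto (fun j => (1 - t * ‖c (φ j)‖⁻¹)) atTop (𝓝 1) := by
        have h0 : Tendsto (fun j => t * ‖c (φ j)‖⁻¹) atTop (𝓝 0) := by
          simpa using hinvc.const_mul t
        simpa using (tendsto_const_nhds (x := (1:ℝ)) (α := ℕ) (f := atTop)).sub h0
      have := (h1.smul (tendsto_const_nhds (x := x0))).add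
        ((tendsto_const_nhds (x := t) (α := ℕ) (f := atTop)).smul hwu)
      simpa using this
    exact hcl.mem_of_tendsto hlim hmem
  -- -u ∈ recc C
  have hmuR : -u ∈ recc C := by
    have hq : ∀ j, ‖c (φ j)‖⁻¹ • d (φ j) ∈ recc C := fun j =>
      recc_smul_mem (hdR (φ j)) (by positivity)
    have hqlim : Tendsto (fun j => ‖c (φ j)‖⁻¹ • d (φ j)) atTop (𝓝 (-u)) := by
      have heq : ∀ j, ‖c (φ j)‖⁻¹ • d (φ j)
          = ‖c (φ j)‖⁻¹ • (c (φ j) + d (φ j)) - w (φ j) := by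
        intro j
        rw [hw, smul_add]
        abel
      have := hkey.sub hwu
      rw [zero_sub] at this
      exact this.congr fun j => (heq j).symm
    exact hrecc_cl.mem_of_tendsto hqlim (Eventually.of_forall hq)
  have := hpointed u huR hmuR
  rw [this] at hu1
  simp at hu1
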